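/- Let H ∈ (0,1). For every x ∈ (0,1), ∫_0^1 [2u^{2H} − (u+x)^{2H} − |u−x|^{2H}] du = ∫_{1−x}^1 u^{2H} du − ∫_1^{1+x} u^{2H} du, and consequently ∫_0^1 [2u^{2H} − (u+x)^{2H} − |u−x|^{2H}] du = −2H x² + o(x²) as x → 0⁺. -/

import Mathlib

open MeasureTheory Filter Set

set_option maxHeartbeats 800000 in
theorem stmt7 (H : ℝ) (hH : H ∈ Set.Ioo (0:ℝ) 1) :
    (∀ x ∈ Set.Ioo (0:ℝ) 1,
      (∫ u in (0:ℝ)..1, (2 * u ^ (2*H) - (u + x) ^ (2*H) - |u - x| ^ (2*H)))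
        = (∫ u in (1 - x)..1, u ^ (2*H)) - ∫ u in (1:ℝ)..(1 + x), u ^ (2*H)) ∧
    Tendsto (fun x : ℝ =>
        ((∫ u in (0:ℝ)..1, (2 * u ^ (2*H) - (u + x) ^ (2*H) - |u - x| ^ (2*H)))
          - (-(2*H) * x ^ 2)) / x ^ 2)
      (nhdsWithin 0 (Set.Ioi 0)) (nhds 0) := by
  obtain ⟨hH0, hH1⟩ := hH
  have h2H : 0 < 2*H := by linarith
  have hα : (0:ℝ) < 2*H+1 := by linarith
  have hαne : (2*H+1 : ℝ) ≠ 0 := ne_of_gt hα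
  have hr : (-1:ℝ) < 2*H := by linarith
  have hcont : Continuous (fun u:ℝ => u ^ (2*H)) :=
    continuous_iff_continuousAt.2 fun u => Real.continuousAt_rpow_const u _ (Or.inr h2H.le)
  -- closed form of the integral
  have key : ∀ x ∈ Set.Ioo (0:ℝ) 1,
      (∫ u in (0:ℝ)..1, (2 * u ^ (2*H) - (u + x) ^ (2*H) - |u - x| ^ (2*H)))
        = (2 - (1+x)^(2*H+1) - (1-x)^(2*H+1)) / (2*H+1) := by
    intro x hx
    obtain ⟨hx0, hx1⟩ := hx
    have hc1 : Continuous (fun u:ℝ => 2 * u ^ (2*H)) := continuous_const.mul hcont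
    have hc2 : Continuous (fun u:ℝ => (u + x) ^ (2*H)) :=
      hcont.comp (continuous_id.add continuous_const)
    have hc3 : Continuous (fun u:ℝ => |u - x| ^ (2*H)) :=
      hcont.comp ((continuous_id.sub continuous_const).abs)
    rw [intervalIntegral.integral_sub ((show Continuous (fun u:ℝ => 2 * u ^ (2*H) - (u + x) ^ (2*H)) from
        hc1.sub hc2).intervalIntegrable _ _)
        (hc3.intervalIntegrable _ _),
      intervalIntegral.integral_sub (hc1.intervalIntegrable _ _) (hc2.intervalIntegrable _ _)]
    have e1 : (∫ u in (0:ℝ)..1, 2 * u ^ (2*H)) = 2 / (2*H+1) := by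
      rw [intervalIntegral.integral_const_mul, integral_rpow (Or.inl hr)]
      rw [Real.one_rpow, Real.zero_rpow hαne]
      ring
    have e2 : (∫ u in (0:ℝ)..1, (u + x) ^ (2*H))
        = ((1+x)^(2*H+1) - x^(2*H+1)) / (2*H+1) := by
      rw [intervalIntegral.integral_comp_add_right (fun u => u ^ (2*H)) x,
        integral_rpow (Or.inl hr)]
      norm_num
    have e3 : (∫ u in (0:ℝ)..1, |u - x| ^ (2*H))
        = (x^(2*H+1) + (1-x)^(2*H+1)) / (2*H+1) := by
      rw [← intervalIntegral.integral_add_adjacent_intervals (a := (0:ℝ)) (b := x) (c := 1)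
        (hc3.intervalIntegrable _ _) (hc3.intervalIntegrable _ _)]
      have p1 : (∫ u in (0:ℝ)..x, |u - x| ^ (2*H)) = ∫ u in (0:ℝ)..x, (x - u) ^ (2*H) := by
        apply intervalIntegral.integral_congr
        intro u hu
        rw [Set.uIcc_of_le hx0.le] at hu
        show |u - x| ^ (2*H) = (x - u) ^ (2*H)
        rw [abs_of_nonpos (by linarith [hu.2]), neg_sub]
      have p2 : (∫ u in x..(1:ℝ), |u - x| ^ (2*H)) = ∫ u in x..(1:ℝ), (u - x) ^ (2*H) := by
        apply intervalIntegral.integral_congr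
        intro u hu
        rw [Set.uIcc_of_le hx1.le] at hu
        show |u - x| ^ (2*H) = (u - x) ^ (2*H)
        rw [abs_of_nonneg (by linarith [hu.1])]
      rw [p1, p2, intervalIntegral.integral_comp_sub_left (fun u => u ^ (2*H)) x,
        intervalIntegral.integral_comp_sub_right (fun u => u ^ (2*H)) x]
      rw [sub_self, sub_zero, integral_rpow (Or.inl hr), integral_rpow (Or.inl hr),
        Real.zero_rpow hαne]
      ring
    rw [e1, e2, e3]
    ring
  constructor
  · intro x hx
    rw [key x hx, integral_rpow (Or.inl hr), integral_rpow (Or.inl hr), Real.one_rpow]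
    ring
  · -- limit part
    have hmem : Set.Ioo (0:ℝ) 1 ∈ nhdsWithin (0:ℝ) (Set.Ioi 0) :=
      Ioo_mem_nhdsGT_of_mem ⟨le_refl 0, zero_lt_one⟩
    set f : ℝ → ℝ := fun x => (2 - (1+x)^(2*H+1) - (1-x)^(2*H+1)) / (2*H+1) - (-(2*H) * x ^ 2)
      with hfdef
    have hcongr : ∀ x ∈ Set.Ioo (0:ℝ) 1,
        ((∫ u in (0:ℝ)..1, (2 * u ^ (2*H) - (u + x) ^ (2*H) - |u - x| ^ (2*H)))
          - (-(2*H) * x ^ 2)) / x ^ 2 = f x / x ^ 2 := by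
      intro x hx
      rw [key x hx]
    refine Tendsto.congr' (Filter.eventuallyEq_of_mem hmem fun x hx => (hcongr x hx).symm) ?_
    -- l'Hopital, twice
    set f' : ℝ → ℝ := fun x =>
      (-((2*H+1) * (1+x)^(2*H+1-1) * 1) - (2*H+1) * (1-x)^(2*H+1-1) * (-1)) / (2*H+1)
        - -(2*H) * (2*x) with hf'def
    set f'' : ℝ → ℝ := fun x =>
      (-((2*H+1) * ((2*H+1-1) * (1+x)^(2*H+1-1-1) * 1) * 1)
         - (2*H+1) * ((2*H+1-1) * (1-x)^(2*H+1-1-1) * (-1)) * (-1)) / (2*H+1)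
        - -(2*H) * (2*1) with hf''def
    have hd1p : ∀ x : ℝ, x ∈ Set.Ioo (0:ℝ) 1 → ∀ p : ℝ,
        HasDerivAt (fun y : ℝ => (1+y) ^ p) (p * (1+x) ^ (p-1) * 1) x := by
      intro x hx p
      exact (Real.hasDerivAt_rpow_const (x := 1+x) (p := p)
        (Or.inl (by nlinarith [hx.1]))).comp x ((hasDerivAt_id x).const_add 1)
    have hd1m : ∀ x : ℝ, x ∈ Set.Ioo (0:ℝ) 1 → ∀ p : ℝ,
        HasDerivAt (fun y : ℝ => (1-y) ^ p) (p * (1-x) ^ (p-1) * (-1)) x := by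
      intro x hx p
      exact (Real.hasDerivAt_rpow_const (x := 1-x) (p := p)
        (Or.inl (by nlinarith [hx.2]))).comp x ((hasDerivAt_id x).const_sub 1)
    have hff' : ∀ x ∈ Set.Ioo (0:ℝ) 1, HasDerivAt f (f' x) x := by
      intro x hx
      have h3 : HasDerivAt (fun y : ℝ => -(2*H) * y ^ 2) (-(2*H) * (2*x)) x := by
        simpa using (hasDerivAt_pow 2 x).const_mul (-(2*H))
      exact ((((hd1p x hx (2*H+1)).const_sub 2).sub (hd1m x hx (2*H+1))).div_const
        (2*H+1)).sub h3
    have hf'f'' : ∀ x ∈ Set.Ioo (0:ℝ) 1, HasDerivAt f' (f'' x) x := by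
      intro x hx
      have h1 := (((hd1p x hx (2*H+1-1)).const_mul (2*H+1)).mul_const 1).neg
      have h2 := ((hd1m x hx (2*H+1-1)).const_mul (2*H+1)).mul_const (-1)
      have h3 : HasDerivAt (fun y : ℝ => -(2*H) * (2*y)) (-(2*H) * (2*1)) x :=
        ((hasDerivAt_id x).const_mul (2:ℝ)).const_mul (-(2*H))
      exact ((h1.sub h2).div_const (2*H+1)).sub h3
    have hgg' : ∀ x ∈ Set.Ioo (0:ℝ) 1, HasDerivAt (fun y : ℝ => y ^ 2) (2*x) x := by
      intro x _
      simpa using hasDerivAt_pow 2 x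
    have hg'g'' : ∀ x ∈ Set.Ioo (0:ℝ) 1, HasDerivAt (fun y : ℝ => 2*y) ((fun _ : ℝ => (2:ℝ)) x) x := by
      intro x _
      simpa using (hasDerivAt_id x).const_mul (2:ℝ)
    -- continuity limits
    have hc1p : ∀ p : ℝ, ContinuousAt (fun y : ℝ => (1+y) ^ p) 0 := by
      intro p
      have h : ContinuousAt (fun y : ℝ => y ^ p) ((1:ℝ)+0) := by
        simpa using Real.continuousAt_rpow_const 1 p (Or.inl one_ne_zero)
      exact h.comp ((continuous_const.add continuous_id).continuousAt)
    have hc1m : ∀ p : ℝ, ContinuousAt (fun y : ℝ => (1-y) ^ p) 0 := by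
      intro p
      have h : ContinuousAt (fun y : ℝ => y ^ p) ((1:ℝ)-0) := by
        simpa using Real.continuousAt_rpow_const 1 p (Or.inl one_ne_zero)
      exact h.comp ((continuous_const.sub continuous_id).continuousAt)
    have hf0 : Tendsto f (nhdsWithin 0 (Set.Ioi 0)) (nhds 0) := by
      have hcf : ContinuousAt f 0 := by
        apply ContinuousAt.sub
        · exact ((continuousAt_const.sub (hc1p (2*H+1))).sub (hc1m (2*H+1))).div_const _
        · exact ((continuous_pow 2).continuousAt (x := (0:ℝ))).const_mul (-(2*H))
      have h0 : f 0 = 0 := by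
        simp only [hfdef]
        norm_num [Real.one_rpow]
      have ht := hcf.tendsto
      rw [h0] at ht
      exact tendsto_nhdsWithin_of_tendsto_nhds ht
    have hf'0 : Tendsto f' (nhdsWithin 0 (Set.Ioi 0)) (nhds 0) := by
      have hcf : ContinuousAt f' 0 := by
        apply ContinuousAt.sub
        · exact (((((hc1p (2*H+1-1)).const_mul (2*H+1)).mul_const 1).neg).sub
            (((hc1m (2*H+1-1)).const_mul (2*H+1)).mul_const (-1))).div_const _
        · exact (continuousAt_id.const_mul (2:ℝ)).const_mul (-(2*H))
      have h0 : f' 0 = 0 := by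
        simp only [hf'def]
        norm_num [Real.one_rpow]
      have ht := hcf.tendsto
      rw [h0] at ht
      exact tendsto_nhdsWithin_of_tendsto_nhds ht
    have hf''0 : Tendsto f'' (nhdsWithin 0 (Set.Ioi 0)) (nhds 0) := by
      have hcf : ContinuousAt f'' 0 := by
        apply ContinuousAt.sub
        · exact (((((hc1p (2*H+1-1-1)).const_mul (2*H+1-1)).mul_const 1).const_mul
            (2*H+1)).mul_const 1 |>.neg.sub
            (((((hc1m (2*H+1-1-1)).const_mul (2*H+1-1)).mul_const (-1)).const_mul
            (2*H+1)).mul_const (-1))).div_const _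
        · exact continuousAt_const
      have h0 : f'' 0 = 0 := by
        simp only [hf''def]
        norm_num [Real.one_rpow]
        field_simp
        ring
      have ht := hcf.tendsto
      rw [h0] at ht
      exact tendsto_nhdsWithin_of_tendsto_nhds ht
    have hg0 : Tendsto (fun y : ℝ => y ^ 2) (nhdsWithin 0 (Set.Ioi 0)) (nhds 0) :=
      tendsto_nhdsWithin_of_tendsto_nhds (by simpa using (continuous_pow 2).tendsto (0:ℝ))
    have hg'0 : Tendsto (fun y : ℝ => 2*y) (nhdsWithin 0 (Set.Ioi 0)) (nhds 0) :=
      tendsto_nhdsWithin_of_tendsto_nhds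
        (by simpa using (show Continuous (fun y:ℝ => 2*y) from
          continuous_const.mul continuous_id).tendsto (0:ℝ))
    have hdiv2 : Tendsto (fun x : ℝ => f'' x / (fun _ : ℝ => (2:ℝ)) x)
        (nhdsWithin 0 (Set.Ioi 0)) (nhds 0) := by
      simpa using hf''0.div_const 2
    have hstep1 : Tendsto (fun x : ℝ => f' x / (2*x))
        (nhdsWithin 0 (Set.Ioi 0)) (nhds 0) :=
      HasDerivAt.lhopital_zero_right_on_Ioo zero_lt_one hf'f'' hg'g''
        (fun x _ => two_ne_zero) hf'0 hg'0 hdiv2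
    exact HasDerivAt.lhopital_zero_right_on_Ioo zero_lt_one hff' hgg'
      (fun x hx => by have : (0:ℝ) < x := hx.1; positivity) hf0 hg0 hstep1
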